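/- Let q be a complex number with 0 < |q| < 1, and let x be a nonzero complex number that is not an integral power of q. Then G(x,q) = (1 − x)·(x·g(x;q) + 1). -/

import Mathlib

open Complex Real

/-- Finite q-Pochhammer symbol `(a;q)_n`. -/
noncomputable def qPoch (a q : ℂ) (n : ℕ) : ℂ := ∏ k ∈ Finset.range n, (1 - a * q ^ k)

/-- Infinite q-Pochhammer symbol `(a;q)_∞`. -/
noncomputable def qPochInf (a q : ℂ) : ℂ := ∏' k : ℕ, (1 - a * q ^ k)

/-- The theta function `j(x;q) = (x;q)_∞ (q/x;q)_∞ (q;q)_∞`. -/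
noncomputable def jTheta (x q : ℂ) : ℂ := qPochInf x q * qPochInf (q / x) q * qPochInf q q

/-- `f_a(q) = ∑_{n≥0} q^{n²} / ∏_{k=1}^n (1 + a q^k + q^{2k})` for real `a`. -/
noncomputable def fRam (a : ℝ) (q : ℂ) : ℂ :=
  ∑' n : ℕ, q ^ (n ^ 2) / ∏ k ∈ Finset.range n, (1 + (a : ℂ) * q ^ (k + 1) + q ^ (2 * (k + 1)))

/-- The universal mock theta function `g(x;q)`. -/
noncomputable def gu (x q : ℂ) : ℂ :=
  x⁻¹ * (-1 + ∑' n : ℕ, q ^ (n ^ 2) / (qPoch x q (n + 1) * qPoch (q * x⁻¹) q n))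

/-- The rank generating function `G(x,q)`. -/
noncomputable def rankG (x q : ℂ) : ℂ :=
  ∑' n : ℕ, q ^ (n ^ 2) / (qPoch (q * x) q n * qPoch (q * x⁻¹) q n)

/-- Ramanujan's theta function `ψ(q)`. -/
noncomputable def psiTheta (q : ℂ) : ℂ := ∑' n : ℕ, q ^ (n * (n + 1) / 2)

/-- Ramanujan's theta function `φ(q)`. -/
noncomputable def phiTheta (q : ℂ) : ℂ := ∑' n : ℤ, q ^ (n ^ 2)

/-- The third order mock theta function `φ̃(q)`. -/
noncomputable def phiTilde (q : ℂ) : ℂ := ∑' n : ℕ, q ^ (n ^ 2) / qPoch (-q ^ 2) (q ^ 2) n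

/-- The Appell–Lerch sum `m(x,q,z)`. -/
noncomputable def mAL (x q z : ℂ) : ℂ :=
  (jTheta z q)⁻¹ *
    ∑' r : ℤ, (-1 : ℂ) ^ r * q ^ (r * (r - 1) / 2) * z ^ r / (1 - q ^ (r - 1) * x * z)

/-- `x` is an integral power of `q`. -/
def IsIntPow (x q : ℂ) : Prop := ∃ n : ℤ, x = q ^ n

/-- The relation between the rank generating function and the universal mock theta function. -/
theorem G_eq_g (q : ℂ) (hq0 : q ≠ 0) (hq : ‖q‖ < 1)
    (x : ℂ) (hx0 : x ≠ 0) (hx1 : ¬ IsIntPow x q) :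
    rankG x q = (1 - x) * (x * gu x q + 1) := by
  have hx1' : x ≠ 1 := fun h => hx1 ⟨0, by simp [h]⟩
  have h1x : (1 : ℂ) - x ≠ 0 := sub_ne_zero.mpr hx1'.symm
  have hpoch : ∀ n : ℕ, qPoch x q (n + 1) = (1 - x) * qPoch (q * x) q n := by
    intro n
    unfold qPoch
    rw [Finset.prod_range_succ']
    simp only [pow_zero, mul_one]
    rw [mul_comm]
    congr 1
    exact Finset.prod_congr rfl fun k _ => by ring
  have hgu : x * gu x q + 1 =
      ∑' n : ℕ, q ^ (n ^ 2) / (qPoch x q (n + 1) * qPoch (q * x⁻¹) q n) := by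
    unfold gu
    field_simp
    ring
  rw [hgu, ← tsum_mul_left]
  unfold rankG
  congr 1
  funext n
  rw [hpoch n, mul_div_assoc', mul_assoc, mul_div_mul_left _ _ h1x]
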